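/- Every partial action α = ({D_t}, {α_t}) of a group G on the algebra F₀(X) arises from a partial action θ = ({X_t}, {h_t}) of G on the set X, i.e., there exist subsets X_t ⊆ X and bijections h_t : X_{t⁻¹} → X_t forming a partial action on X such that D_t = F₀(X_t) and α_t(f) = f ∘ h_{t⁻¹}. -/

import Mathlib

/-- A partial action of a group `G` on a (possibly non-unital) `K`-algebra `A`:
two-sided ideals `D t` (with `D e = A`) together with `K`-algebra isomorphisms
`α t : D t⁻¹ → D t` (modelled as total functions constrained on `D t⁻¹`)
satisfying the partial action axioms. -/
structure AlgPartialAction (G : Type*) [Group G] (K : Type*) [Field K]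
    (A : Type*) [NonUnitalRing A] [Module K A] where
  /-- the ideals `D_t` -/
  D : G → Set A
  /-- the isomorphisms `α_t : D_{t⁻¹} → D_t`, as total functions -/
  α : G → A → A
  D_add : ∀ t, ∀ a ∈ D t, ∀ b ∈ D t, a + b ∈ D t
  D_zero : ∀ t, (0 : A) ∈ D t
  D_smul : ∀ t (k : K), ∀ a ∈ D t, k • a ∈ D t
  D_mul_right : ∀ t, ∀ a ∈ D t, ∀ b : A, a * b ∈ D t
  D_mul_left : ∀ t, ∀ a ∈ D t, ∀ b : A, b * a ∈ D t
  D_one : D 1 = Set.univ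
  α_one : ∀ a, α 1 a = a
  α_maps : ∀ t, ∀ a ∈ D t⁻¹, α t a ∈ D t
  α_add : ∀ t, ∀ a ∈ D t⁻¹, ∀ b ∈ D t⁻¹, α t (a + b) = α t a + α t b
  α_smul : ∀ t (k : K), ∀ a ∈ D t⁻¹, α t (k • a) = k • α t a
  α_mul : ∀ t, ∀ a ∈ D t⁻¹, ∀ b ∈ D t⁻¹, α t (a * b) = α t a * α t b
  α_inv : ∀ t, ∀ a ∈ D t⁻¹, α t⁻¹ (α t a) = a
  α_image : ∀ t s, α t '' (D t⁻¹ ∩ D s) = D t ∩ D (t * s)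
  α_comp : ∀ t s, ∀ a ∈ D s⁻¹, a ∈ D (s⁻¹ * t⁻¹) → α t (α s a) = α (t * s) a

/-- A partial action `θ = ({X_t}, {h_t})` of a group `G` on a set `X`.
Each `h t` is modelled as a total function `X → X` whose behaviour is only
constrained on the domain `Xt t⁻¹`; the axioms say that `h t` restricts to a
bijection from `Xt t⁻¹` onto `Xt t` (with inverse `h t⁻¹`) and that the usual
partial action axioms hold. -/
structure PartialAction (G X : Type*) [Group G] where
  /-- the domains `X_t` -/
  Xt : G → Set X
  /-- the partial bijections `h_t`, as total functions -/
  h : G → X → X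
  Xt_one : Xt 1 = Set.univ
  h_one : ∀ x, h 1 x = x
  maps_to : ∀ t x, x ∈ Xt t⁻¹ → h t x ∈ Xt t
  h_inv : ∀ t x, x ∈ Xt t⁻¹ → h t⁻¹ (h t x) = x
  image_eq : ∀ t s, h t '' (Xt t⁻¹ ∩ Xt s) = Xt t ∩ Xt (t * s)
  h_comp : ∀ t s x, x ∈ Xt s⁻¹ → x ∈ Xt (s⁻¹ * t⁻¹) → h t (h s x) = h (t * s) x

variable {G X : Type*} [Group G]

/-- A partial action is free if `h t x = x` for some `x ∈ X_{t⁻¹}` implies `t = e`. -/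
def PartialAction.Free (pa : PartialAction G X) : Prop :=
  ∀ t x, x ∈ pa.Xt t⁻¹ → pa.h t x = x → t = 1

/-- The equivalence relation `R` associated to a partial action. -/
def PartialAction.Rel (pa : PartialAction G X) : Set (X × X) :=
  {p | ∃ t, p.1 ∈ pa.Xt t⁻¹ ∧ pa.h t p.1 = p.2}


section Statement9Aux

variable {K : Type*} [Field K] {G X : Type*} [Group G]

private lemma sgl_mul (x : X) (f : X →₀ K) :
    Finsupp.single x (1:K) * f = Finsupp.single x (f x) := by
  ext y
  rw [Finsupp.mul_apply]
  rcases eq_or_ne y x with rfl | hy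
  · simp
  · simp [Finsupp.single_apply, hy, Ne.symm hy]

private lemma ap_single_mem (ap : AlgPartialAction G K (X →₀ K)) {t : G} {f : X →₀ K}
    (hf : f ∈ ap.D t) {x : X} (hx : f x ≠ 0) : Finsupp.single x (1:K) ∈ ap.D t := by
  have h1 : Finsupp.single x (1:K) * f ∈ ap.D t := ap.D_mul_left t f hf _
  have h2 : (f x)⁻¹ • (Finsupp.single x (1:K) * f) ∈ ap.D t := ap.D_smul t _ _ h1
  rwa [sgl_mul, Finsupp.smul_single', inv_mul_cancel₀ hx] at h2

private lemma ap_alpha_zero (ap : AlgPartialAction G K (X →₀ K)) (t : G) :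
    ap.α t 0 = 0 := by
  have := ap.α_smul t 0 0 (ap.D_zero _)
  simpa using this

private lemma ap_exists_single (ap : AlgPartialAction G K (X →₀ K)) (t : G) (x : X)
    (hx : Finsupp.single x (1:K) ∈ ap.D t⁻¹) :
    ∃ y, ap.α t (Finsupp.single x 1) = Finsupp.single y (1:K) := by
  set e := ap.α t (Finsupp.single x (1:K)) with he
  have heD : e ∈ ap.D t := ap.α_maps t _ hx
  have hsq : Finsupp.single x (1:K) * Finsupp.single x (1:K) = Finsupp.single x (1:K) := by
    rw [sgl_mul]; simp
  have hee : e * e = e := by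
    rw [he, ← ap.α_mul t _ hx _ hx, hsq]
  have hne : e ≠ 0 := by
    intro h0
    have := ap.α_inv t _ hx
    rw [← he, h0, ap_alpha_zero] at this
    exact one_ne_zero (Finsupp.single_eq_zero.mp this.symm)
  have hval : ∀ z, e z = 0 ∨ e z = 1 := by
    intro z
    have : e z * e z = e z := by rw [← Finsupp.mul_apply, hee]
    rcases eq_or_ne (e z) 0 with h | h
    · exact Or.inl h
    · exact Or.inr (by field_simp at this; exact this)
  obtain ⟨y, hy⟩ : ∃ y, e y ≠ 0 := by
    by_contra h
    push_neg at h
    exact hne (Finsupp.ext h)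
  have hy1 : e y = 1 := (hval y).resolve_left hy
  refine ⟨y, ?_⟩
  -- show e = single y 1
  have hyD : Finsupp.single y (1:K) ∈ ap.D t := ap_single_mem ap heD hy
  set g := ap.α t⁻¹ (Finsupp.single y (1:K)) with hg
  have hyD' : Finsupp.single y (1:K) ∈ ap.D t⁻¹⁻¹ := by rwa [inv_inv]
  have hgD : g ∈ ap.D t⁻¹ := ap.α_maps t⁻¹ _ hyD'
  have hαg : ap.α t g = Finsupp.single y (1:K) := by
    have := ap.α_inv t⁻¹ _ hyD'
    rwa [inv_inv] at this
  have hkey : g x • e = Finsupp.single y (1:K) := by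
    have h1 : ap.α t (g * Finsupp.single x (1:K)) = Finsupp.single y (1:K) * e := by
      rw [ap.α_mul t _ hgD _ hx, hαg]
    have h2 : g * Finsupp.single x (1:K) = g x • Finsupp.single x (1:K) := by
      rw [mul_comm, sgl_mul, Finsupp.smul_single', mul_one]
    have h3 : Finsupp.single y (1:K) * e = Finsupp.single y (1:K) := by
      rw [sgl_mul, hy1]
    rw [h2, ap.α_smul t _ _ hx, ← he] at h1
    rw [h1, h3]
  have hgx : g x = 1 := by
    have := congrArg (fun f => f y) hkey
    simpa [hy1] using this
  rw [← hkey, hgx, one_smul]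

open Classical in
/-- the partial bijections extracted from an algebraic partial action -/
private noncomputable def apH (ap : AlgPartialAction G K (X →₀ K)) (t : G) (x : X) : X :=
  if hx : Finsupp.single x (1:K) ∈ ap.D t⁻¹ then (ap_exists_single ap t x hx).choose else x

private lemma apH_spec (ap : AlgPartialAction G K (X →₀ K)) {t : G} {x : X}
    (hx : Finsupp.single x (1:K) ∈ ap.D t⁻¹) :
    ap.α t (Finsupp.single x 1) = Finsupp.single (apH ap t x) (1:K) := by
  unfold apH
  rw [dif_pos hx]
  exact (ap_exists_single ap t x hx).choose_spec

private lemma sgl_inj : Function.Injective fun y : X => Finsupp.single y (1:K) :=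
  Finsupp.single_left_injective one_ne_zero

end Statement9Aux

private lemma ap_D_eq {K : Type*} [Field K] {G X : Type*} [Group G]
    (ap : AlgPartialAction G K (X →₀ K)) (t : G) :
    ap.D t = {f : X →₀ K | ∀ x, Finsupp.single x (1:K) ∉ ap.D t → f x = 0} := by
  ext f
  constructor
  · intro hf x hx
    by_contra h
    exact hx (ap_single_mem ap hf h)
  · intro hf
    suffices key : ∀ g : X →₀ K, (∀ x, Finsupp.single x (1:K) ∉ ap.D t → g x = 0) → g ∈ ap.D t
      from key f hf
    intro g
    induction g using Finsupp.induction with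
      | zero => exact fun _ => ap.D_zero t
      | single_add a b f ha0 hb ih =>
        intro H
        have hfa : f a = 0 := Finsupp.notMem_support_iff.mp ha0
        have haX : Finsupp.single a (1:K) ∈ ap.D t := by
          by_contra h
          have := H a h
          rw [Finsupp.add_apply, Finsupp.single_eq_same, hfa, add_zero] at this
          exact hb this
        have hfD : f ∈ ap.D t := ih (fun x hx => by
          have hxa : x ≠ a := fun h => hx (h ▸ haX)
          have := H x hx
          rwa [Finsupp.add_apply, Finsupp.single_eq_of_ne hxa,
            zero_add] at this)
        have hsD : Finsupp.single a b ∈ ap.D t := by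
          have := ap.D_smul t b _ haX
          rwa [Finsupp.smul_single', mul_one] at this
        exact ap.D_add t _ hsD _ hfD

theorem statement9' (K : Type*) [Field K] {G X : Type*} [Group G]
    (ap : AlgPartialAction G K (X →₀ K)) :
    ∃ pa : PartialAction G X,
      (∀ t, ap.D t = {f : X →₀ K | ∀ x ∉ pa.Xt t, f x = 0}) ∧
      (∀ t, ∀ f ∈ ap.D t⁻¹,
        (∀ x ∈ pa.Xt t, ap.α t f x = f (pa.h t⁻¹ x)) ∧
        (∀ x ∉ pa.Xt t, ap.α t f x = 0)) := by
  -- the set-theoretic partial action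
  have maps : ∀ (t : G) (x : X), Finsupp.single x (1:K) ∈ ap.D t⁻¹ →
      Finsupp.single (apH ap t x) (1:K) ∈ ap.D t := by
    intro t x hx
    rw [← apH_spec ap hx]
    exact ap.α_maps t _ hx
  have hinv : ∀ (t : G) (x : X), Finsupp.single x (1:K) ∈ ap.D t⁻¹ →
      apH ap t⁻¹ (apH ap t x) = x := by
    intro t x hx
    have hyD : Finsupp.single (apH ap t x) (1:K) ∈ ap.D t⁻¹⁻¹ := by
      rw [inv_inv]; exact maps t x hx
    apply sgl_inj (K := K)
    show Finsupp.single (apH ap t⁻¹ (apH ap t x)) (1:K) = Finsupp.single x (1:K)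
    rw [← apH_spec ap hyD, ← apH_spec ap hx, ap.α_inv t _ hx]
  refine ⟨⟨fun t => {x | Finsupp.single x (1:K) ∈ ap.D t}, apH ap, ?_, ?_, maps, hinv, ?_, ?_⟩,
    ?_, ?_⟩
  · -- Xt_one
    ext x
    simp [ap.D_one]
  · -- h_one
    intro x
    have hx : Finsupp.single x (1:K) ∈ ap.D (1:G)⁻¹ := by
      rw [inv_one, ap.D_one]; trivial
    apply sgl_inj (K := K)
    show Finsupp.single (apH ap 1 x) (1:K) = Finsupp.single x (1:K)
    rw [← apH_spec ap hx, ap.α_one]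
  · -- image_eq
    intro t s
    ext y
    constructor
    · rintro ⟨x, ⟨hx1, hx2⟩, rfl⟩
      have : ap.α t (Finsupp.single x (1:K)) ∈ ap.D t ∩ ap.D (t * s) := by
        rw [← ap.α_image t s]
        exact ⟨_, ⟨hx1, hx2⟩, rfl⟩
      rwa [apH_spec ap hx1] at this
    · intro hy
      have hy' : Finsupp.single y (1:K) ∈ ap.α t '' (ap.D t⁻¹ ∩ ap.D s) := by
        rw [ap.α_image t s]; exact hy
      obtain ⟨g, ⟨hg1, hg2⟩, hgy⟩ := hy'
      have hyD : Finsupp.single y (1:K) ∈ ap.D t⁻¹⁻¹ := by rw [inv_inv]; exact hy.1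
      have hg : g = Finsupp.single (apH ap t⁻¹ y) (1:K) := by
        rw [← apH_spec ap hyD, ← hgy, ap.α_inv t _ hg1]
      refine ⟨apH ap t⁻¹ y, ⟨?_, ?_⟩, ?_⟩
      · show Finsupp.single (apH ap t⁻¹ y) (1:K) ∈ ap.D t⁻¹
        rw [← hg]; exact hg1
      · show Finsupp.single (apH ap t⁻¹ y) (1:K) ∈ ap.D s
        rw [← hg]; exact hg2
      · have : Finsupp.single (apH ap t⁻¹ y) (1:K) ∈ ap.D t⁻¹ := by rw [← hg]; exact hg1
        apply sgl_inj (K := K)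
        show Finsupp.single (apH ap t (apH ap t⁻¹ y)) (1:K) = Finsupp.single y (1:K)
        rw [← apH_spec ap this, ← hg, hgy]
  · -- h_comp
    intro t s x hx1 hx2
    have hsx : Finsupp.single (apH ap s x) (1:K) ∈ ap.D t⁻¹ := by
      have : ap.α s (Finsupp.single x (1:K)) ∈ ap.D s ∩ ap.D (s * (s⁻¹ * t⁻¹)) := by
        rw [← ap.α_image s (s⁻¹ * t⁻¹)]
        exact ⟨_, ⟨hx1, hx2⟩, rfl⟩
      rw [apH_spec ap hx1] at this
      have h2 := this.2
      rwa [mul_inv_cancel_left] at h2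
    have hx3 : Finsupp.single x (1:K) ∈ ap.D (t * s)⁻¹ := by
      rwa [mul_inv_rev]
    apply sgl_inj (K := K)
    show Finsupp.single (apH ap t (apH ap s x)) (1:K)
        = Finsupp.single (apH ap (t * s) x) (1:K)
    rw [← apH_spec ap hsx, ← apH_spec ap hx3, ← apH_spec ap hx1,
      ap.α_comp t s _ hx1 hx2]
  · -- D description
    intro t
    exact ap_D_eq ap t
  · -- α description
    intro t f hf
    constructor
    · intro x hx
      -- hx : single x 1 ∈ D t
      have hxD : Finsupp.single x (1:K) ∈ ap.D t⁻¹⁻¹ := by rw [inv_inv]; exact hx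
      set w := apH ap t⁻¹ x with hw
      have hw1 : ap.α t⁻¹ (Finsupp.single x (1:K)) = Finsupp.single w (1:K) :=
        apH_spec ap hxD
      have hwD : Finsupp.single w (1:K) ∈ ap.D t⁻¹ := by
        rw [← hw1]; exact ap.α_maps t⁻¹ _ hxD
      have hαw : ap.α t (Finsupp.single w (1:K)) = Finsupp.single x (1:K) := by
        have := ap.α_inv t⁻¹ _ hxD
        rwa [inv_inv, hw1] at this
      have key : Finsupp.single x (ap.α t f x) = Finsupp.single x (f w) := by
        have h1 : ap.α t (Finsupp.single w (1:K) * f)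
            = Finsupp.single x (1:K) * ap.α t f := by
          rw [ap.α_mul t _ hwD _ hf, hαw]
        have h2 : Finsupp.single w (1:K) * f = f w • Finsupp.single w (1:K) := by
          rw [sgl_mul, Finsupp.smul_single', mul_one]
        rw [h2, ap.α_smul t _ _ hwD, hαw, Finsupp.smul_single', mul_one, sgl_mul] at h1
        exact h1.symm
      have := congrArg (fun g : X →₀ K => g x) key
      simpa using this
    · intro x hx
      by_contra h
      exact hx (ap_single_mem ap (ap.α_maps t f hf) h)

/-- Every partial action `({D_t}, {α_t})` of `G` on the algebra
`F₀(X) = X →₀ K` arises from a partial action `({X_t}, {h_t})` of `G` on the set `X`: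
there are subsets `X_t ⊆ X` and partial bijections `h_t` forming a partial action on `X`
with `D t = F₀(X_t)` and `α t f = f ∘ h t⁻¹` on `D t⁻¹`. -/
theorem statement9 (K : Type*) [Field K] {G X : Type*} [Group G]
    (ap : AlgPartialAction G K (X →₀ K)) :
    ∃ pa : PartialAction G X,
      (∀ t, ap.D t = {f : X →₀ K | ∀ x ∉ pa.Xt t, f x = 0}) ∧
      (∀ t, ∀ f ∈ ap.D t⁻¹,
        (∀ x ∈ pa.Xt t, ap.α t f x = f (pa.h t⁻¹ x)) ∧
        (∀ x ∉ pa.Xt t, ap.α t f x = 0)) :=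
  statement9' K ap
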